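/- Let V be a Banach space densely and continuously embedded in a Banach space E and let {A(t)}_{t≥0} satisfy the hyperbolic conditions (Hyp1)–(Hyp3) with constants M, ω, M_V, ω_V; let {R(t,s)}_{t≥s≥0} be the evolution system determined by {A(t)}_{t≥0} (the unique evolution system satisfying ‖R(t,s)‖ ≤ M e^{ω(t−s)}, ∂⁺/∂t R(t,s)v|_{t=s} = A(s)v and ∂/∂s R(t,s)v = −R(t,s)A(s)v for v∈V). Let {Ŝ(t)}_{t≥0} be a C₀ semigroup on E with generator Â such that V ⊂ D(Â), V is Â-admissible, and ‖Ŝ(τ)‖ ≤ M̂ e^{ω̂ τ} for all τ≥0. Then for every v̄∈V and all 0≤s≤t: ‖Ŝ(t−s)v̄ − R(t,s)v̄‖ ≤ M̂ M_V e^{(|ω̂|+|ω_V|)t} ‖v̄‖_V ∫_s^t ‖A(r) − Â‖_{L(V,E)} dr. -/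

import Mathlib

open MeasureTheory Filter Set Topology

/-- An evolution system on a Banach space `E`. -/
def IsEvolutionSystem {E : Type*} [NormedAddCommGroup E] [NormedSpace ℝ E]
    (R : ℝ → ℝ → E →L[ℝ] E) : Prop :=
  (∀ t : ℝ, 0 ≤ t → R t t = ContinuousLinearMap.id ℝ E) ∧
  (∀ t s r : ℝ, 0 ≤ r → r ≤ s → s ≤ t → (R t s).comp (R s r) = R t r) ∧
  (∀ u : E, ContinuousOn (fun p : ℝ × ℝ => R p.1 p.2 u) {p : ℝ × ℝ | 0 ≤ p.2 ∧ p.2 ≤ p.1})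

/-- A `C₀` semigroup of bounded linear operators on `E`. -/
def IsC0Semigroup {E : Type*} [NormedAddCommGroup E] [NormedSpace ℝ E]
    (S : ℝ → E →L[ℝ] E) : Prop :=
  S 0 = ContinuousLinearMap.id ℝ E ∧
  (∀ t s : ℝ, 0 ≤ t → 0 ≤ s → S (t + s) = (S t).comp (S s)) ∧
  (∀ u : E, ContinuousOn (fun t : ℝ => S t u) (Set.Ici 0))

/-- The composition `S(t_{n-1})(s_{n-1}) ∘ ⋯ ∘ S(t_0)(s_0)` of members of a two-parameter
family of operators. -/
def prodOps {E : Type*} [NormedAddCommGroup E] [NormedSpace ℝ E]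
    (S : ℝ → ℝ → E →L[ℝ] E) (t s : ℕ → ℝ) : ℕ → E →L[ℝ] E
  | 0 => ContinuousLinearMap.id ℝ E
  | n + 1 => (S (t n) (s n)).comp (prodOps S t s n)

/-- Stability of a family `{S(t)}_{t ≥ 0}` of semigroups with constants `M`, `ω`:
`‖S(tₙ)(sₙ) ⋯ S(t₁)(s₁)‖ ≤ M e^{ω(s₁+⋯+sₙ)}` for `0 ≤ t₁ ≤ ⋯ ≤ tₙ` and `sᵢ ≥ 0`. -/
def IsStableFamily {E : Type*} [NormedAddCommGroup E] [NormedSpace ℝ E]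
    (S : ℝ → ℝ → E →L[ℝ] E) (M ω : ℝ) : Prop :=
  ∀ (n : ℕ) (t s : ℕ → ℝ), (∀ i, 0 ≤ t i) → (∀ i j, i ≤ j → t i ≤ t j) → (∀ i, 0 ≤ s i) →
    ‖prodOps S t s n‖ ≤ M * Real.exp (ω * ∑ i ∈ Finset.range n, s i)

/-- The hyperbolic (Kato) conditions (Hyp1)–(Hyp3) for a family `{A(t)}_{t≥0}` of generators,
relative to a continuous dense embedding `ι : V → E`. Here `S t` is the `C₀` semigroup on `E`
generated by `A(t)`, `SV t` is its restriction to `V` (admissibility), and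
`A t : V →L[ℝ] E` is the restriction of `A(t)` to `V` (so that `V ⊆ D(A(t))`). -/
structure IsHyperbolicFamily {V E : Type*}
    [NormedAddCommGroup V] [NormedSpace ℝ V]
    [NormedAddCommGroup E] [NormedSpace ℝ E]
    (iota : V →L[ℝ] E) (A : ℝ → (V →L[ℝ] E))
    (S : ℝ → ℝ → E →L[ℝ] E) (SV : ℝ → ℝ → V →L[ℝ] V)
    (M om MV omV : ℝ) : Prop where
  /-- (Hyp1): each `S t` is a `C₀` semigroup on `E`. -/
  sem_E : ∀ t : ℝ, 0 ≤ t → IsC0Semigroup (S t)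
  /-- (Hyp1)/(Hyp3): `A(t)v` is the generator of `S t` applied to `v ∈ V`. -/
  gen_on_V : ∀ t : ℝ, 0 ≤ t → ∀ v : V,
    Filter.Tendsto (fun h : ℝ => h⁻¹ • (S t h (iota v) - iota v)) (nhdsWithin 0 (Set.Ioi 0))
      (nhds (A t v))
  /-- (Hyp1): stability on `E` with constants `M`, `ω`. -/
  stable_E : IsStableFamily S M om
  /-- (Hyp2): each restricted semigroup `SV t` is a `C₀` semigroup on `V`. -/
  sem_V : ∀ t : ℝ, 0 ≤ t → IsC0Semigroup (SV t)
  /-- (Hyp2): `V` is `A(t)`-admissible, `SV t` being the restriction of `S t` to `V`. -/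
  compat : ∀ t h : ℝ, 0 ≤ t → 0 ≤ h → ∀ v : V, iota (SV t h v) = S t h (iota v)
  /-- (Hyp2): stability on `V` with constants `M_V`, `ω_V`. -/
  stable_V : IsStableFamily SV MV omV
  /-- (Hyp3): `t ↦ A(t) ∈ L(V,E)` is norm continuous on `[0,∞)`. -/
  contA : ContinuousOn A (Set.Ici 0)

/-- `R` is the evolution system determined by the hyperbolic family `{A(t)}` (with
restriction data `ι`, constants `M`, `ω`): an evolution system satisfying the exponential
bound, the forward derivative identity at `t = s` and the backward derivative identity
on `V`. -/
def IsDeterminedEvolutionSystem {V E : Type*}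
    [NormedAddCommGroup V] [NormedSpace ℝ V]
    [NormedAddCommGroup E] [NormedSpace ℝ E]
    (iota : V →L[ℝ] E) (A : ℝ → (V →L[ℝ] E)) (M om : ℝ)
    (R : ℝ → ℝ → E →L[ℝ] E) : Prop :=
  IsEvolutionSystem R ∧
  (∀ t s : ℝ, 0 ≤ s → s ≤ t → ‖R t s‖ ≤ M * Real.exp (om * (t - s))) ∧
  (∀ s : ℝ, 0 ≤ s → ∀ v : V,
    Filter.Tendsto (fun h : ℝ => h⁻¹ • (R (s + h) s (iota v) - iota v))
      (nhdsWithin 0 (Set.Ioi 0)) (nhds (A s v))) ∧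
  (∀ t : ℝ, ∀ v : V, ∀ s ∈ Set.Icc (0:ℝ) t,
    HasDerivWithinAt (fun σ : ℝ => R t σ (iota v)) (-(R t s (A s v))) (Set.Icc 0 t) s)

section Aux

open Filter Set Topology

variable {E : Type*} [NormedAddCommGroup E] [NormedSpace ℝ E]

lemma stable_single {S : ℝ → ℝ → E →L[ℝ] E} {M ω : ℝ} (h : IsStableFamily S M ω)
    (a τ : ℝ) (ha : 0 ≤ a) (hτ : 0 ≤ τ) :
    ‖S a τ‖ ≤ M * Real.exp (ω * τ) := by
  have := h 1 (fun _ => a) (fun _ => τ) (fun _ => ha) (fun _ _ _ => le_rfl) (fun _ => hτ)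
  simpa [prodOps, Finset.sum_range_one] using this

lemma prodOps_congr (S : ℝ → ℝ → E →L[ℝ] E) (t s₁ s₂ : ℕ → ℝ) :
    ∀ n : ℕ, (∀ j, j < n → s₁ j = s₂ j) → prodOps S t s₁ n = prodOps S t s₂ n
  | 0, _ => rfl
  | (n+1), h => by
    simp only [prodOps, h n (Nat.lt_succ_self n),
      prodOps_congr S t s₁ s₂ n (fun j hj => h j (hj.trans (Nat.lt_succ_self n)))]

lemma c0_deriv {S : ℝ → E →L[ℝ] E} (hS : IsC0Semigroup S)
    {K κ : ℝ} (hK : ∀ τ : ℝ, 0 ≤ τ → ‖S τ‖ ≤ K * Real.exp (κ * τ))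
    {x y : E} (hxy : Tendsto (fun h : ℝ => h⁻¹ • (S h x - x)) (𝓝[>] (0:ℝ)) (𝓝 y))
    {θ : ℝ} (hθ : 0 ≤ θ) :
    HasDerivWithinAt (fun τ => S τ x) (S θ y) (Ici 0) θ := by
  obtain ⟨hS0, hSadd, hScont⟩ := hS
  have hK0 : 0 ≤ K := by
    have h := (norm_nonneg (S 0)).trans (hK 0 le_rfl); simpa using h
  rw [hasDerivWithinAt_iff_tendsto_slope]
  have hsub : Ici (0:ℝ) \ {θ} ⊆ Ico 0 θ ∪ Ioi θ := by
    rintro u ⟨hu, hne⟩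
    have hne' : u ≠ θ := by simpa using hne
    rcases hne'.lt_or_gt with h | h
    · exact Or.inl ⟨hu, h⟩
    · exact Or.inr h
  refine Tendsto.mono_left ?_ (nhdsWithin_mono θ hsub)
  rw [nhdsWithin_union, tendsto_sup]
  constructor
  · -- left piece : u ∈ Ico 0 θ
    have hq : Tendsto (fun u : ℝ => θ - u) (𝓝[Ico 0 θ] θ) (𝓝[>] (0:ℝ)) := by
      rw [tendsto_nhdsWithin_iff]
      constructor
      · have : Tendsto (fun u : ℝ => θ - u) (𝓝 θ) (𝓝 (θ - θ)) :=
          (tendsto_const_nhds.sub tendsto_id)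
        simpa using this.mono_left nhdsWithin_le_nhds
      · filter_upwards [self_mem_nhdsWithin] with u hu
        exact sub_pos.mpr hu.2
    have hlim : Tendsto (fun u : ℝ => (θ - u)⁻¹ • (S (θ - u) x - x)) (𝓝[Ico 0 θ] θ) (𝓝 y) :=
      hxy.comp hq
    apply Tendsto.congr'
      (f₁ := fun u => S u y + S u ((θ - u)⁻¹ • (S (θ - u) x - x) - y))
    · filter_upwards [self_mem_nhdsWithin] with u hu
      obtain ⟨hu0, huθ⟩ := hu
      have hθeq : S θ x = S u (S (θ - u) x) := by
        have e := hSadd u (θ - u) hu0 (by linarith)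
        have e2 : u + (θ - u) = θ := by ring
        rw [e2] at e
        rw [e]; rfl
      have hmain : S u y + S u ((θ - u)⁻¹ • (S (θ - u) x - x) - y)
          = S u ((θ - u)⁻¹ • (S (θ - u) x - x)) := by
        rw [← map_add]; congr 1; abel
      rw [hmain, slope_comm, slope_def_module, hθeq]
      simp only [← map_sub, ← _root_.map_smul]
    · have t1 : Tendsto (fun u => S u y) (𝓝[Ico 0 θ] θ) (𝓝 (S θ y)) := by
        have := (hScont y) θ (mem_Ici.mpr hθ)
        exact this.mono_left (nhdsWithin_mono θ Ico_subset_Ici_self)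
      have t2 : Tendsto (fun u => S u ((θ - u)⁻¹ • (S (θ - u) x - x) - y))
          (𝓝[Ico 0 θ] θ) (𝓝 0) := by
        apply squeeze_zero_norm'
          (a := fun u => (K * Real.exp (|κ| * θ)) * ‖(θ - u)⁻¹ • (S (θ - u) x - x) - y‖)
        · filter_upwards [self_mem_nhdsWithin] with u hu
          obtain ⟨hu0, huθ⟩ := hu
          have hb : ‖S u‖ ≤ K * Real.exp (|κ| * θ) := by
            refine (hK u hu0).trans ?_
            have : κ * u ≤ |κ| * θ := by
              calc κ * u ≤ |κ| * u := mul_le_mul_of_nonneg_right (le_abs_self κ) hu0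
              _ ≤ |κ| * θ := mul_le_mul_of_nonneg_left huθ.le (abs_nonneg κ)
            exact mul_le_mul_of_nonneg_left (Real.exp_le_exp.mpr this) hK0
          calc ‖S u ((θ - u)⁻¹ • (S (θ - u) x - x) - y)‖
              ≤ ‖S u‖ * ‖(θ - u)⁻¹ • (S (θ - u) x - x) - y‖ := (S u).le_opNorm _
          _ ≤ (K * Real.exp (|κ| * θ)) * ‖(θ - u)⁻¹ • (S (θ - u) x - x) - y‖ :=
              mul_le_mul_of_nonneg_right hb (norm_nonneg _)
        · have : Tendsto (fun u => (θ - u)⁻¹ • (S (θ - u) x - x) - y) (𝓝[Ico 0 θ] θ) (𝓝 0) := by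
            simpa using hlim.sub (tendsto_const_nhds (x := y))
          simpa using (this.norm.const_mul (K * Real.exp (|κ| * θ)))
      simpa using t1.add t2
  · -- right piece : u ∈ Ioi θ
    have hq : Tendsto (fun u : ℝ => u - θ) (𝓝[Ioi θ] θ) (𝓝[>] (0:ℝ)) := by
      rw [tendsto_nhdsWithin_iff]
      constructor
      · have : Tendsto (fun u : ℝ => u - θ) (𝓝 θ) (𝓝 (θ - θ)) :=
          (tendsto_id.sub tendsto_const_nhds)
        simpa using this.mono_left nhdsWithin_le_nhds
      · filter_upwards [self_mem_nhdsWithin] with u hu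
        exact sub_pos.mpr (mem_Ioi.mp hu)
    apply Tendsto.congr'
      (f₁ := fun u => S θ ((u - θ)⁻¹ • (S (u - θ) x - x)))
    · filter_upwards [self_mem_nhdsWithin] with u hu
      have hueq : S u x = S θ (S (u - θ) x) := by
        have e := hSadd θ (u - θ) hθ (by simpa using (le_of_lt (sub_pos.mpr (mem_Ioi.mp hu))))
        have e2 : θ + (u - θ) = u := by ring
        rw [e2] at e
        rw [e]; rfl
      rw [slope_def_module, hueq]
      simp only [← map_sub, ← _root_.map_smul]
    · exact ((S θ).continuous.tendsto y).comp (hxy.comp hq)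

lemma comp_deriv {Φ : ℝ → E →L[ℝ] E} {x : ℝ → E} {s : Set ℝ} {σ : ℝ} {D₁ D₂ : E} {K : ℝ}
    (h1 : HasDerivWithinAt (fun σ' => Φ σ' (x σ)) D₁ s σ)
    (h2 : HasDerivWithinAt x D₂ s σ)
    (hb : ∀ σ' ∈ s, ‖Φ σ'‖ ≤ K)
    (hc : Tendsto (fun σ' => Φ σ' D₂) (𝓝[s] σ) (𝓝 (Φ σ D₂))) :
    HasDerivWithinAt (fun σ' => Φ σ' (x σ')) (D₁ + Φ σ D₂) s σ := by
  rw [hasDerivWithinAt_iff_tendsto_slope] at h1 h2 ⊢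
  have key : ∀ σ' ∈ s \ {σ}, slope (fun τ => Φ τ (x σ)) σ σ'
      + (Φ σ' (slope x σ σ' - D₂) + Φ σ' D₂) = slope (fun τ => Φ τ (x τ)) σ σ' := by
    intro σ' _
    simp only [slope_def_module, _root_.map_smul, map_sub, smul_sub]
    abel
  apply Tendsto.congr' (Filter.eventuallyEq_of_mem self_mem_nhdsWithin key)
  have e2 : Tendsto (fun σ' => Φ σ' (slope x σ σ' - D₂)) (𝓝[s \ {σ}] σ) (𝓝 0) := by
    apply squeeze_zero_norm' (a := fun σ' => K * ‖slope x σ σ' - D₂‖)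
    · filter_upwards [self_mem_nhdsWithin] with σ' hσ'
      calc ‖Φ σ' (slope x σ σ' - D₂)‖ ≤ ‖Φ σ'‖ * ‖slope x σ σ' - D₂‖ := (Φ σ').le_opNorm _
      _ ≤ K * ‖slope x σ σ' - D₂‖ := mul_le_mul_of_nonneg_right (hb σ' hσ'.1) (norm_nonneg _)
    · have : Tendsto (fun σ' => slope x σ σ' - D₂) (𝓝[s \ {σ}] σ) (𝓝 0) := by
        simpa using h2.sub (tendsto_const_nhds (x := D₂))
      simpa using (this.norm.const_mul K)
  have e3 : Tendsto (fun σ' => Φ σ' D₂) (𝓝[s \ {σ}] σ) (𝓝 (Φ σ D₂)) :=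
    hc.mono_left (nhdsWithin_mono σ diff_subset)
  have := h1.add (e2.add e3)
  simpa using this

lemma commute_gen {V : Type*} [NormedAddCommGroup V] [NormedSpace ℝ V]
    {iota : V →L[ℝ] E} {SE : ℝ → E →L[ℝ] E} {SVf : ℝ → V →L[ℝ] V} {Aop : V →L[ℝ] E}
    (hsem : IsC0Semigroup SE)
    (hcompat : ∀ h : ℝ, 0 ≤ h → ∀ v : V, iota (SVf h v) = SE h (iota v))
    (hgen : ∀ v : V, Tendsto (fun h : ℝ => h⁻¹ • (SE h (iota v) - iota v))
      (𝓝[>] (0:ℝ)) (𝓝 (Aop v)))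
    (w : V) (τ : ℝ) (hτ : 0 ≤ τ) :
    SE τ (Aop w) = Aop (SVf τ w) := by
  have l1 := hgen (SVf τ w)
  have l2 : Tendsto (fun h : ℝ => h⁻¹ • (SE h (iota (SVf τ w)) - iota (SVf τ w)))
      (𝓝[>] (0:ℝ)) (𝓝 (SE τ (Aop w))) := by
    have heq : ∀ h ∈ Ioi (0:ℝ),
        SE τ (h⁻¹ • (SE h (iota w) - iota w))
          = h⁻¹ • (SE h (iota (SVf τ w)) - iota (SVf τ w)) := by
      intro h hh
      rw [hcompat τ hτ w]
      have hco : SE h ((SE τ) (iota w)) = SE τ (SE h (iota w)) := by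
        have e1 := hsem.2.1 h τ (le_of_lt hh) hτ
        have e2 := hsem.2.1 τ h hτ (le_of_lt hh)
        calc SE h (SE τ (iota w)) = SE (h + τ) (iota w) := by rw [e1]; rfl
        _ = SE (τ + h) (iota w) := by rw [add_comm]
        _ = SE τ (SE h (iota w)) := by rw [e2]; rfl
      rw [_root_.map_smul, map_sub, hco]
    exact Tendsto.congr' (Filter.eventuallyEq_of_mem self_mem_nhdsWithin heq)
      (((SE τ).continuous.tendsto _).comp (hgen w))
  exact tendsto_nhds_unique l2 l1

end Aux

/-- The key estimate in the proof of Theorem 3.4: comparing the evolution system determined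
by a hyperbolic family `{A(t)}` with the semigroup `Ŝ` generated by `Â`,
`‖Ŝ(t−s)v − R(t,s)v‖ ≤ M̂ M_V e^{(|ω̂|+|ω_V|)t} ‖v‖_V ∫ₛᵗ ‖A(r) − Â‖_{L(V,E)} dr`. -/
theorem semigroup_vs_evolution_system_estimate
    {V E : Type*} [NormedAddCommGroup V] [NormedSpace ℝ V] [CompleteSpace V]
    [NormedAddCommGroup E] [NormedSpace ℝ E] [CompleteSpace E]
    (iota : V →L[ℝ] E) (hinj : Function.Injective iota) (hdense : DenseRange iota)
    (A : ℝ → (V →L[ℝ] E)) (S : ℝ → ℝ → E →L[ℝ] E) (SV : ℝ → ℝ → V →L[ℝ] V)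
    (M om MV omV : ℝ) (hM : 1 ≤ M) (hMV : 1 ≤ MV)
    (hhyp : IsHyperbolicFamily iota A S SV M om MV omV)
    (R : ℝ → ℝ → E →L[ℝ] E)
    (hdet : IsDeterminedEvolutionSystem iota A M om R)
    -- the C₀ semigroup Ŝ with generator Â, V being Â-admissible and V ⊆ D(Â),
    -- `Ahat` being the restriction of Â to V
    (Shat : ℝ → E →L[ℝ] E) (hShat : IsC0Semigroup Shat)
    (SVhat : ℝ → V →L[ℝ] V) (hSVhat : IsC0Semigroup SVhat)
    (hcompat : ∀ h : ℝ, 0 ≤ h → ∀ v : V, iota (SVhat h v) = Shat h (iota v))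
    (Ahat : V →L[ℝ] E)
    (hgen : ∀ v : V,
      Tendsto (fun h : ℝ => h⁻¹ • (Shat h (iota v) - iota v)) (𝓝[>] 0) (𝓝 (Ahat v)))
    (Mhat omhat : ℝ)
    (hShatbd : ∀ τ : ℝ, 0 ≤ τ → ‖Shat τ‖ ≤ Mhat * Real.exp (omhat * τ)) :
    ∀ (v : V) (t s : ℝ), 0 ≤ s → s ≤ t →
      ‖Shat (t - s) (iota v) - R t s (iota v)‖ ≤
        Mhat * MV * Real.exp ((|omhat| + |omV|) * t) * ‖v‖ *
          ∫ r in s..t, ‖A r - Ahat‖ := by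
  intro v t s hs0 hst
  obtain ⟨⟨hRid, hRcomp, hRcont⟩, hRbd, _hRfwd, hRbwd⟩ := hdet
  rcases eq_or_lt_of_le hst with heq | hlt
  · subst heq
    simp [sub_self, hShat.1, hRid s hs0, intervalIntegral.integral_same]
  have ht0 : (0:ℝ) ≤ t := hs0.trans hst
  have hM0 : (0:ℝ) ≤ M := le_trans zero_le_one hM
  have hMV0 : (0:ℝ) ≤ MV := le_trans zero_le_one hMV
  have hMhat0 : (0:ℝ) ≤ Mhat := by
    have h := (norm_nonneg (Shat 0)).trans (hShatbd 0 le_rfl); simpa using h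
  set C : ℝ := Mhat * MV * Real.exp ((|omhat| + |omV|) * t) * ‖v‖ with hC
  set CI : ℝ := M * Real.exp (|om| * t) * (MV * Real.exp (|omV| * t) * ‖v‖) with hCI
  set C₂ : ℝ := M * Real.exp (|om| * t) * CI with hC2
  have hC0 : 0 ≤ C := by
    exact mul_nonneg (mul_nonneg (mul_nonneg hMhat0 hMV0) (Real.exp_pos _).le) (norm_nonneg _)
  have hCI0 : 0 ≤ CI :=
    mul_nonneg (mul_nonneg hM0 (Real.exp_pos _).le)
      (mul_nonneg (mul_nonneg hMV0 (Real.exp_pos _).le) (norm_nonneg _))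
  have hC20 : 0 ≤ C₂ := mul_nonneg (mul_nonneg hM0 (Real.exp_pos _).le) hCI0
  have hAcont : ContinuousOn A (Icc (0:ℝ) t) := hhyp.contA.mono Icc_subset_Ici_self
  have hgcont : ContinuousOn (fun ρ : ℝ => ‖A ρ - Ahat‖) (Icc (0:ℝ) t) :=
    (hAcont.sub continuousOn_const).norm
  have hgint : ∀ a b : ℝ, a ∈ Icc s t → b ∈ Icc s t → a ≤ b →
      IntervalIntegrable (fun ρ : ℝ => ‖A ρ - Ahat‖) MeasureTheory.volume a b := by
    intro a b ha hb hab
    apply ContinuousOn.intervalIntegrable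
    apply hgcont.mono
    rw [uIcc_of_le hab]
    exact Icc_subset_Icc (le_trans hs0 ha.1) hb.2
  have hucA : ∀ εA : ℝ, 0 < εA → ∃ δ > 0, ∀ a ∈ Icc (0:ℝ) t, ∀ b ∈ Icc (0:ℝ) t,
      |a - b| < δ → ‖A a - A b‖ ≤ εA := by
    intro εA hεA
    have huc := isCompact_Icc.uniformContinuousOn_of_continuous hAcont
    rw [Metric.uniformContinuousOn_iff] at huc
    obtain ⟨δ, hδ, hδ'⟩ := huc εA hεA
    refine ⟨δ, hδ, fun a ha b hb hab => ?_⟩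
    have := hδ' a ha b hb (by rwa [Real.dist_eq])
    rw [dist_eq_norm] at this
    exact this.le
  -- single-operator bounds
  have hSbd : ∀ a τ : ℝ, 0 ≤ a → 0 ≤ τ → ‖S a τ‖ ≤ M * Real.exp (om * τ) :=
    fun a τ ha hτ => stable_single hhyp.stable_E a τ ha hτ
  have hShat' : ∀ c : ℝ, 0 ≤ c → c ≤ t → ‖Shat c‖ ≤ Mhat * Real.exp (|omhat| * t) := by
    intro c h0 hct
    refine (hShatbd c h0).trans ?_
    refine mul_le_mul_of_nonneg_left (Real.exp_le_exp.mpr ?_) hMhat0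
    calc omhat * c ≤ |omhat| * c := mul_le_mul_of_nonneg_right (le_abs_self _) h0
    _ ≤ |omhat| * t := mul_le_mul_of_nonneg_left hct (abs_nonneg _)
  have hRbd' : ∀ a b : ℝ, 0 ≤ b → b ≤ a → a ≤ t → ‖R a b‖ ≤ M * Real.exp (|om| * t) := by
    intro a b hb hba hat
    refine (hRbd a b hb hba).trans ?_
    refine mul_le_mul_of_nonneg_left (Real.exp_le_exp.mpr ?_) hM0
    calc om * (a - b) ≤ |om| * (a - b) :=
      mul_le_mul_of_nonneg_right (le_abs_self _) (by linarith)
    _ ≤ |om| * t := mul_le_mul_of_nonneg_left (by linarith) (abs_nonneg _)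
  -- the ε-approximation argument
  apply le_of_forall_pos_le_add
  intro ε hε
  set D : ℝ := (t - s) * (C + C₂) + 1 with hD
  have hD0 : 0 < D := by
    have h1 : 0 ≤ (t - s) * (C + C₂) :=
      mul_nonneg (by linarith) (by linarith)
    rw [hD]; linarith
  set εA : ℝ := ε / D with hεA
  have hεA0 : 0 < εA := div_pos hε hD0
  obtain ⟨δ, hδ0, hmod⟩ := hucA εA hεA0
  obtain ⟨n, hn⟩ := exists_nat_gt ((t - s) / δ)
  have hn0 : 0 < (n:ℝ) := (div_pos (sub_pos.mpr hlt) hδ0).trans hn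
  have hnne : (n:ℝ) ≠ 0 := hn0.ne'
  set Δ : ℝ := (t - s) / n with hΔ
  have hΔ0 : 0 < Δ := div_pos (sub_pos.mpr hlt) hn0
  have hΔδ : Δ < δ := by
    rw [hΔ, div_lt_iff₀ hn0, mul_comm δ (n:ℝ)]
    exact (div_lt_iff₀ hδ0).mp hn
  have hnΔ : (n:ℝ) * Δ = t - s := by
    rw [hΔ]; field_simp
  set r : ℕ → ℝ := fun i => s + i * Δ with hr
  have hr0' : r 0 = s := by simp [hr]
  have hrmono : ∀ i j : ℕ, i ≤ j → r i ≤ r j := by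
    intro i j hij
    simp only [hr]
    have h1 : (i:ℝ) ≤ j := Nat.cast_le.mpr hij
    have h2 := mul_le_mul_of_nonneg_right h1 hΔ0.le
    linarith
  have hr0 : ∀ i, 0 ≤ r i := by
    intro i
    have := hrmono 0 i (Nat.zero_le i)
    rw [hr0'] at this
    linarith
  have hrs : ∀ i, s ≤ r i := by
    intro i
    have := hrmono 0 i (Nat.zero_le i)
    rwa [hr0'] at this
  have hrsucc : ∀ i : ℕ, r (i+1) = r i + Δ := by
    intro i; simp only [hr]; push_cast; ring
  have hrn : r n = t := by
    simp only [hr]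
    rw [hnΔ]; ring
  have hrle : ∀ i : ℕ, i ≤ n → r i ≤ t := by
    intro i hi
    have := hrmono i n hi
    rwa [hrn] at this
  set w : ℕ → V := fun i => prodOps SV r (fun _ => Δ) i v with hw
  have hw0 : w 0 = v := rfl
  have hwsucc : ∀ i, w (i+1) = SV (r i) Δ (w i) := fun i => rfl
  -- bound on the V-chain
  have hwbd : ∀ i : ℕ, i < n → ∀ τ ∈ Icc (0:ℝ) Δ,
      ‖SV (r i) τ (w i)‖ ≤ MV * Real.exp (|omV| * t) * ‖v‖ := by
    intro i hi τ hτ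
    classical
    set sq : ℕ → ℝ := fun j => if j = i then τ else Δ with hsq
    have hpe : SV (r i) τ (w i) = prodOps SV r sq (i+1) v := by
      have hcong : prodOps SV r sq i = prodOps SV r (fun _ => Δ) i :=
        prodOps_congr SV r sq (fun _ => Δ) i (fun j hj => by simp [hsq, Nat.ne_of_lt hj])
      rw [show prodOps SV r sq (i+1) = (SV (r i) (sq i)).comp (prodOps SV r sq i) from rfl, hcong]
      simp [hsq, hw]
    have hst' := hhyp.stable_V (i+1) r sq hr0 hrmono (fun j => by
      by_cases h : j = i
      · simpa [hsq, h] using hτ.1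
      · simpa [hsq, h] using hΔ0.le)
    have hsum : ∑ j ∈ Finset.range (i+1), sq j = τ + i * Δ := by
      rw [Finset.sum_range_succ]
      have hsum0 : ∑ j ∈ Finset.range i, sq j = i * Δ := by
        have hc : ∀ j ∈ Finset.range i, sq j = Δ := fun j hj => by
          simp [hsq, Nat.ne_of_lt (Finset.mem_range.mp hj)]
        rw [Finset.sum_congr rfl hc, Finset.sum_const, Finset.card_range, nsmul_eq_mul]
      rw [hsum0, show sq i = τ by simp [hsq]]; ring
    rw [hsum] at hst'
    have hτit : τ + i * Δ ≤ t := by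
      have hin : ((i:ℝ) + 1) ≤ (n:ℝ) := by exact_mod_cast Nat.succ_le_of_lt hi
      have h5 : ((i:ℝ) + 1) * Δ ≤ (n:ℝ) * Δ := mul_le_mul_of_nonneg_right hin hΔ0.le
      rw [hnΔ, add_mul, one_mul] at h5
      linarith [hτ.2, hs0]
    have hτi0 : 0 ≤ τ + i * Δ := by
      have : (0:ℝ) ≤ (i:ℝ) * Δ := mul_nonneg (Nat.cast_nonneg i) hΔ0.le
      linarith [hτ.1]
    rw [hpe]
    calc ‖prodOps SV r sq (i+1) v‖ ≤ ‖prodOps SV r sq (i+1)‖ * ‖v‖ :=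
      ContinuousLinearMap.le_opNorm _ _
    _ ≤ (MV * Real.exp (omV * (τ + i*Δ))) * ‖v‖ :=
      mul_le_mul_of_nonneg_right hst' (norm_nonneg v)
    _ ≤ MV * Real.exp (|omV| * t) * ‖v‖ := by
      refine mul_le_mul_of_nonneg_right ?_ (norm_nonneg v)
      refine mul_le_mul_of_nonneg_left (Real.exp_le_exp.mpr ?_) hMV0
      calc omV * (τ + i*Δ) ≤ |omV| * (τ + i*Δ) :=
        mul_le_mul_of_nonneg_right (le_abs_self _) hτi0
      _ ≤ |omV| * t := mul_le_mul_of_nonneg_left hτit (abs_nonneg _)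
  -- the key per-step estimates
  have keystep : ∀ i : ℕ, i < n →
      ‖Shat (t - r i) (iota (w i)) - Shat (t - r (i+1)) (iota (w (i+1)))‖
        ≤ C * ‖A (r i) - Ahat‖ * Δ ∧
      ‖R (r (i+1)) (r i) (iota (w i)) - iota (w (i+1))‖ ≤ CI * εA * Δ := by
    intro i hi
    have hri0 : 0 ≤ r i := hr0 i
    have hri1 : 0 ≤ r (i+1) := hr0 (i+1)
    have hrit : r (i+1) ≤ t := hrle (i+1) hi
    have hrit' : r i ≤ t := hrle i hi.le
    have hriΔ : r (i+1) = r i + Δ := hrsucc i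
    have hriΔt : r i + Δ ≤ t := by rw [← hriΔ]; exact hrit
    -- the moving path
    have hxpV : ∀ τ : ℝ, 0 ≤ τ → S (r i) τ (iota (w i)) = iota (SV (r i) τ (w i)) :=
      fun τ hτ => (hhyp.compat (r i) τ hri0 hτ (w i)).symm
    have hx : ∀ τ ∈ Icc (0:ℝ) Δ, HasDerivWithinAt (fun τ' => S (r i) τ' (iota (w i)))
        (S (r i) τ (A (r i) (w i))) (Icc 0 Δ) τ := by
      intro τ hτ
      exact (c0_deriv (hhyp.sem_E (r i) hri0) (fun τ' hτ' => hSbd (r i) τ' hri0 hτ')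
        (hhyp.gen_on_V (r i) hri0 (w i)) hτ.1).mono Icc_subset_Ici_self
    have hcomm : ∀ τ : ℝ, 0 ≤ τ →
        S (r i) τ (A (r i) (w i)) = A (r i) (SV (r i) τ (w i)) :=
      fun τ hτ => commute_gen (hhyp.sem_E (r i) hri0)
        (fun h hh u => hhyp.compat (r i) h hri0 hh u) (hhyp.gen_on_V (r i) hri0) (w i) τ hτ
    constructor
    · -- Shat side
      have hder : ∀ τ ∈ Icc (0:ℝ) Δ, HasDerivWithinAt
          (fun τ' => Shat (t - r i - τ') (S (r i) τ' (iota (w i))))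
          ((fun τ => Shat (t - r i - τ)
            ((A (r i) - Ahat) (SV (r i) τ (w i)))) τ) (Icc 0 Δ) τ := by
        intro τ hτ
        have hτt : 0 ≤ t - r i - τ := by
          have := hτ.2; linarith
        have base : HasDerivWithinAt (fun θ => Shat θ (iota (SV (r i) τ (w i))))
            (Shat (t - r i - τ) (Ahat (SV (r i) τ (w i)))) (Ici 0) (t - r i - τ) :=
          c0_deriv hShat hShatbd (hgen (SV (r i) τ (w i))) hτt
        have inner : HasDerivWithinAt (fun τ' : ℝ => t - r i - τ') (-1) (Icc (0:ℝ) Δ) τ := by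
          simpa using ((hasDerivAt_id τ).const_sub (t - r i)).hasDerivWithinAt
        have hmaps : MapsTo (fun τ' : ℝ => t - r i - τ') (Icc (0:ℝ) Δ) (Ici (0:ℝ)) := by
          intro τ' hτ'
          have := hτ'.2
          simp only [mem_Ici]; linarith
        have h1 : HasDerivWithinAt (fun τ' => Shat (t - r i - τ')
            (S (r i) τ (iota (w i))))
            (-(Shat (t - r i - τ) (Ahat (SV (r i) τ (w i))))) (Icc 0 Δ) τ := by
          rw [hxpV τ hτ.1]
          have := HasDerivWithinAt.scomp (x := τ) base inner hmaps
          simpa [Function.comp_def, neg_one_smul] using this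
        have hb : ∀ τ' ∈ Icc (0:ℝ) Δ,
            ‖Shat (t - r i - τ')‖ ≤ Mhat * Real.exp (|omhat| * t) := by
          intro τ' hτ'
          refine hShat' _ (by have := hτ'.2; linarith) (by have := hτ'.1; linarith)
        have hcs : Tendsto (fun τ' => Shat (t - r i - τ') (S (r i) τ (A (r i) (w i))))
            (𝓝[Icc (0:ℝ) Δ] τ)
            (𝓝 (Shat (t - r i - τ) (S (r i) τ (A (r i) (w i))))) := by
          have hco : ContinuousOn (fun τ' : ℝ =>
              Shat (t - r i - τ') (S (r i) τ (A (r i) (w i)))) (Icc 0 Δ) :=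
            (hShat.2.2 _).comp (by fun_prop) hmaps
          exact hco τ hτ
        have hres := comp_deriv (Φ := fun τ' => Shat (t - r i - τ'))
          (x := fun τ' => S (r i) τ' (iota (w i))) h1 (hx τ hτ) hb hcs
        rw [hcomm τ hτ.1] at hres
        convert hres using 1
        simp only [ContinuousLinearMap.sub_apply, map_sub]
        abel
      have hbound : ∀ τ ∈ Icc (0:ℝ) Δ,
          ‖Shat (t - r i - τ) ((A (r i) - Ahat) (SV (r i) τ (w i)))‖
            ≤ C * ‖A (r i) - Ahat‖ := by
        intro τ hτ
        have h1 : ‖Shat (t - r i - τ)‖ ≤ Mhat * Real.exp (|omhat| * t) :=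
          hShat' _ (by have := hτ.2; linarith) (by have := hτ.1; linarith)
        have h2 : ‖(A (r i) - Ahat) (SV (r i) τ (w i))‖
            ≤ ‖A (r i) - Ahat‖ * (MV * Real.exp (|omV| * t) * ‖v‖) := by
          calc ‖(A (r i) - Ahat) (SV (r i) τ (w i))‖
              ≤ ‖A (r i) - Ahat‖ * ‖SV (r i) τ (w i)‖ := ContinuousLinearMap.le_opNorm _ _
          _ ≤ ‖A (r i) - Ahat‖ * (MV * Real.exp (|omV| * t) * ‖v‖) :=
            mul_le_mul_of_nonneg_left (hwbd i hi τ hτ) (norm_nonneg _)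
        calc ‖Shat (t - r i - τ) ((A (r i) - Ahat) (SV (r i) τ (w i)))‖
            ≤ ‖Shat (t - r i - τ)‖ * ‖(A (r i) - Ahat) (SV (r i) τ (w i))‖ :=
          ContinuousLinearMap.le_opNorm _ _
        _ ≤ (Mhat * Real.exp (|omhat| * t))
            * (‖A (r i) - Ahat‖ * (MV * Real.exp (|omV| * t) * ‖v‖)) :=
          mul_le_mul h1 h2 (norm_nonneg _)
            (mul_nonneg hMhat0 (Real.exp_pos _).le)
        _ = C * ‖A (r i) - Ahat‖ := by
          rw [hC, add_mul, Real.exp_add]; ring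
      have hmvt := Convex.norm_image_sub_le_of_norm_hasDerivWithin_le
        (f := fun τ' => Shat (t - r i - τ') (S (r i) τ' (iota (w i))))
        (f' := fun τ => Shat (t - r i - τ) ((A (r i) - Ahat) (SV (r i) τ (w i))))
        hder hbound (convex_Icc 0 Δ) (left_mem_Icc.mpr hΔ0.le) (right_mem_Icc.mpr hΔ0.le)
      have hF0 : Shat (t - r i - 0) (S (r i) 0 (iota (w i))) = Shat (t - r i) (iota (w i)) := by
        rw [(hhyp.sem_E (r i) hri0).1, sub_zero]; rfl
      have hFΔ : Shat (t - r i - Δ) (S (r i) Δ (iota (w i)))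
          = Shat (t - r (i+1)) (iota (w (i+1))) := by
        rw [hxpV Δ hΔ0.le, ← hwsucc i, hriΔ, sub_sub]
      rw [← hF0, ← hFΔ, norm_sub_rev]
      calc ‖Shat (t - r i - Δ) (S (r i) Δ (iota (w i)))
          - Shat (t - r i - 0) (S (r i) 0 (iota (w i)))‖
          ≤ C * ‖A (r i) - Ahat‖ * ‖Δ - 0‖ := hmvt
      _ = C * ‖A (r i) - Ahat‖ * Δ := by rw [sub_zero, Real.norm_of_nonneg hΔ0.le]
    · -- R side
      have hder : ∀ τ ∈ Icc (0:ℝ) Δ, HasDerivWithinAt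
          (fun τ' => R (r (i+1)) (r i + τ') (S (r i) τ' (iota (w i))))
          ((fun τ => R (r (i+1)) (r i + τ)
            ((A (r i) - A (r i + τ)) (SV (r i) τ (w i)))) τ) (Icc 0 Δ) τ := by
        intro τ hτ
        have hmem : r i + τ ∈ Icc (0:ℝ) (r (i+1)) :=
          ⟨by linarith [hτ.1], by rw [hriΔ]; linarith [hτ.2]⟩
        have base := hRbwd (r (i+1)) (SV (r i) τ (w i)) (r i + τ) hmem
        have inner : HasDerivWithinAt (fun τ' : ℝ => r i + τ') 1 (Icc (0:ℝ) Δ) τ := by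
          simpa using ((hasDerivAt_id τ).const_add (r i)).hasDerivWithinAt
        have hmaps : MapsTo (fun τ' : ℝ => r i + τ') (Icc (0:ℝ) Δ) (Icc (0:ℝ) (r (i+1))) := by
          intro τ' hτ'
          simp only [mem_Icc]
          constructor
          · linarith [hτ'.1]
          · rw [hriΔ]; linarith [hτ'.2]
        have h1 : HasDerivWithinAt (fun τ' => R (r (i+1)) (r i + τ')
            (S (r i) τ (iota (w i))))
            (-(R (r (i+1)) (r i + τ) (A (r i + τ) (SV (r i) τ (w i))))) (Icc 0 Δ) τ := by
          rw [hxpV τ hτ.1]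
          have := HasDerivWithinAt.scomp (x := τ) base inner hmaps
          simpa [Function.comp_def, one_smul] using this
        have hb : ∀ τ' ∈ Icc (0:ℝ) Δ,
            ‖R (r (i+1)) (r i + τ')‖ ≤ M * Real.exp (|om| * t) := by
          intro τ' hτ'
          exact hRbd' _ _ (by linarith [hτ'.1]) (by rw [hriΔ]; linarith [hτ'.2]) hrit
        have hcs : Tendsto (fun τ' => R (r (i+1)) (r i + τ') (S (r i) τ (A (r i) (w i))))
            (𝓝[Icc (0:ℝ) Δ] τ)
            (𝓝 (R (r (i+1)) (r i + τ) (S (r i) τ (A (r i) (w i))))) := by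
          have hγ : ContinuousOn (fun τ' : ℝ => ((r (i+1) : ℝ), r i + τ')) (Icc (0:ℝ) Δ) := by
            fun_prop
          have hγm : MapsTo (fun τ' : ℝ => ((r (i+1) : ℝ), r i + τ')) (Icc (0:ℝ) Δ)
              {p : ℝ × ℝ | 0 ≤ p.2 ∧ p.2 ≤ p.1} := by
            intro τ' hτ'
            exact ⟨by simp; linarith [hτ'.1], by simp [hriΔ]; linarith [hτ'.2]⟩
          have hco : ContinuousOn (fun τ' : ℝ =>
              R (r (i+1)) (r i + τ') (S (r i) τ (A (r i) (w i)))) (Icc 0 Δ) :=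
            (hRcont _).comp hγ hγm
          exact hco τ hτ
        have hres := comp_deriv (Φ := fun τ' => R (r (i+1)) (r i + τ'))
          (x := fun τ' => S (r i) τ' (iota (w i))) h1 (hx τ hτ) hb hcs
        rw [hcomm τ hτ.1] at hres
        convert hres using 1
        simp only [ContinuousLinearMap.sub_apply, map_sub]
        abel
      have hbound : ∀ τ ∈ Icc (0:ℝ) Δ,
          ‖R (r (i+1)) (r i + τ) ((A (r i) - A (r i + τ)) (SV (r i) τ (w i)))‖
            ≤ CI * εA := by
        intro τ hτ
        have h1 : ‖R (r (i+1)) (r i + τ)‖ ≤ M * Real.exp (|om| * t) :=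
          hRbd' _ _ (by linarith [hτ.1]) (by rw [hriΔ]; linarith [hτ.2]) hrit
        have hmodA : ‖A (r i) - A (r i + τ)‖ ≤ εA := by
          refine hmod (r i) ⟨hri0, hrit'⟩ (r i + τ)
            ⟨by linarith [hτ.1], by linarith [hτ.2]⟩ ?_
          have habs : |r i - (r i + τ)| = τ := by
            rw [abs_sub_comm]
            simp [abs_of_nonneg hτ.1]
          rw [habs]; linarith [hτ.2]
        have h2 : ‖(A (r i) - A (r i + τ)) (SV (r i) τ (w i))‖
            ≤ εA * (MV * Real.exp (|omV| * t) * ‖v‖) := by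
          calc ‖(A (r i) - A (r i + τ)) (SV (r i) τ (w i))‖
              ≤ ‖A (r i) - A (r i + τ)‖ * ‖SV (r i) τ (w i)‖ :=
            ContinuousLinearMap.le_opNorm _ _
          _ ≤ εA * (MV * Real.exp (|omV| * t) * ‖v‖) :=
            mul_le_mul hmodA (hwbd i hi τ hτ) (norm_nonneg _) hεA0.le
        calc ‖R (r (i+1)) (r i + τ) ((A (r i) - A (r i + τ)) (SV (r i) τ (w i)))‖
            ≤ ‖R (r (i+1)) (r i + τ)‖ * ‖(A (r i) - A (r i + τ)) (SV (r i) τ (w i))‖ :=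
          ContinuousLinearMap.le_opNorm _ _
        _ ≤ (M * Real.exp (|om| * t)) * (εA * (MV * Real.exp (|omV| * t) * ‖v‖)) :=
          mul_le_mul h1 h2 (norm_nonneg _) (mul_nonneg hM0 (Real.exp_pos _).le)
        _ = CI * εA := by rw [hCI]; ring
      have hmvt := Convex.norm_image_sub_le_of_norm_hasDerivWithin_le
        (f := fun τ' => R (r (i+1)) (r i + τ') (S (r i) τ' (iota (w i))))
        (f' := fun τ => R (r (i+1)) (r i + τ) ((A (r i) - A (r i + τ)) (SV (r i) τ (w i))))
        hder hbound (convex_Icc 0 Δ) (left_mem_Icc.mpr hΔ0.le) (right_mem_Icc.mpr hΔ0.le)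
      have hG0 : R (r (i+1)) (r i + 0) (S (r i) 0 (iota (w i)))
          = R (r (i+1)) (r i) (iota (w i)) := by
        rw [(hhyp.sem_E (r i) hri0).1, add_zero]; rfl
      have hGΔ : R (r (i+1)) (r i + Δ) (S (r i) Δ (iota (w i))) = iota (w (i+1)) := by
        rw [hxpV Δ hΔ0.le, ← hwsucc i, ← hriΔ, hRid (r (i+1)) hri1]; rfl
      rw [← hG0, ← hGΔ, norm_sub_rev]
      calc ‖R (r (i+1)) (r i + Δ) (S (r i) Δ (iota (w i)))
          - R (r (i+1)) (r i + 0) (S (r i) 0 (iota (w i)))‖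
          ≤ CI * εA * ‖Δ - 0‖ := hmvt
      _ = CI * εA * Δ := by rw [sub_zero, Real.norm_of_nonneg hΔ0.le]
  -- telescope for Shat
  have tele1 : ‖Shat (t - s) (iota v) - iota (w n)‖
      ≤ ∑ i ∈ Finset.range n, (C * ‖A (r i) - Ahat‖ * Δ) := by
    have e : Shat (t - s) (iota v) - iota (w n)
        = ∑ i ∈ Finset.range n,
          (Shat (t - r i) (iota (w i)) - Shat (t - r (i+1)) (iota (w (i+1)))) := by
      rw [Finset.sum_range_sub' (f := fun i => Shat (t - r i) (iota (w i))), hr0', hrn,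
        hw0, sub_self, hShat.1]
      rfl
    rw [e]
    refine (norm_sum_le _ _).trans (Finset.sum_le_sum ?_)
    intro i hi
    exact (keystep i (Finset.mem_range.mp hi)).1
  -- telescope for R
  have tele2 : ‖iota (w n) - R t s (iota v)‖ ≤ C₂ * εA * (t - s) := by
    have e : R t s (iota v) - iota (w n)
        = ∑ i ∈ Finset.range n,
          (R t (r i) (iota (w i)) - R t (r (i+1)) (iota (w (i+1)))) := by
      rw [Finset.sum_range_sub' (f := fun i => R t (r i) (iota (w i))), hr0', hrn,
        hw0, hRid t ht0]
      rfl
    rw [norm_sub_rev, e]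
    refine le_trans ((norm_sum_le _ _).trans (Finset.sum_le_sum
      (g := fun _ : ℕ => M * Real.exp (|om| * t) * (CI * εA * Δ)) ?_)) ?_
    · intro i hi
      have hi' := Finset.mem_range.mp hi
      have hdiff : R t (r i) (iota (w i)) - R t (r (i+1)) (iota (w (i+1)))
          = R t (r (i+1)) (R (r (i+1)) (r i) (iota (w i)) - iota (w (i+1))) := by
        rw [map_sub]
        congr 1
        have hcomp := hRcomp t (r (i+1)) (r i) (hr0 i) (hrmono i (i+1) (Nat.le_succ i))
          (hrle (i+1) hi')
        rw [← hcomp]; rfl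
      rw [hdiff]
      calc ‖R t (r (i+1)) (R (r (i+1)) (r i) (iota (w i)) - iota (w (i+1)))‖
          ≤ ‖R t (r (i+1))‖ * ‖R (r (i+1)) (r i) (iota (w i)) - iota (w (i+1))‖ :=
        ContinuousLinearMap.le_opNorm _ _
      _ ≤ M * Real.exp (|om| * t) * (CI * εA * Δ) :=
        mul_le_mul (hRbd' t (r (i+1)) (hr0 _) (hrle _ hi') le_rfl)
          (keystep i hi').2 (norm_nonneg _) (mul_nonneg hM0 (Real.exp_pos _).le)
    · rw [Finset.sum_const, Finset.card_range, nsmul_eq_mul]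
      have he : (n:ℝ) * (M * Real.exp (|om| * t) * (CI * εA * Δ)) = C₂ * εA * (t - s) := by
        rw [hC2, ← hnΔ]; ring
      exact le_of_eq he
  -- Riemann sum comparison
  have riemann : ∑ i ∈ Finset.range n, ‖A (r i) - Ahat‖ * Δ
      ≤ (∫ ρ in s..t, ‖A ρ - Ahat‖) + εA * (t - s) := by
    have hintpiece : ∀ k : ℕ, k < n → IntervalIntegrable
        (fun ρ : ℝ => ‖A ρ - Ahat‖ + εA) MeasureTheory.volume (r k) (r (k+1)) := by
      intro k hk
      exact (hgint (r k) (r (k+1)) ⟨hrs k, hrle k hk.le⟩ ⟨hrs (k+1), hrle (k+1) hk⟩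
        (hrmono k (k+1) (Nat.le_succ k))).add intervalIntegrable_const
    have hpiece : ∀ i ∈ Finset.range n,
        ‖A (r i) - Ahat‖ * Δ ≤ ∫ ρ in (r i)..(r (i+1)), (‖A ρ - Ahat‖ + εA) := by
      intro i hi
      have hi' := Finset.mem_range.mp hi
      have h1 : ‖A (r i) - Ahat‖ * Δ = ∫ _ in (r i)..(r (i+1)), ‖A (r i) - Ahat‖ := by
        rw [intervalIntegral.integral_const, hrsucc i, smul_eq_mul]
        ring_nf
      rw [h1]
      refine intervalIntegral.integral_mono_on (by rw [hrsucc i]; linarith [hΔ0.le])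
        intervalIntegrable_const (hintpiece i hi') ?_
      intro ρ hρ
      have hρt : ρ ≤ t := le_trans hρ.2 (by rw [hrsucc i]; linarith [hrle (i+1) hi', hrsucc i])
      have hρ0 : 0 ≤ ρ := le_trans (hr0 i) hρ.1
      have hmodA : ‖A (r i) - A ρ‖ ≤ εA := by
        refine hmod (r i) ⟨hr0 i, hrle i hi'.le⟩ ρ ⟨hρ0, hρt⟩ ?_
        have habs : |r i - ρ| = ρ - r i := by
          rw [abs_sub_comm]
          exact abs_of_nonneg (by linarith [hρ.1])
        rw [habs]
        have := hρ.2
        rw [hrsucc i] at this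
        linarith
      have htriangle : ‖A (r i) - Ahat‖ - ‖A ρ - Ahat‖ ≤ ‖A (r i) - A ρ‖ := by
        have h := norm_sub_norm_le (A (r i) - Ahat) (A ρ - Ahat)
        rwa [sub_sub_sub_cancel_right] at h
      linarith
    calc ∑ i ∈ Finset.range n, ‖A (r i) - Ahat‖ * Δ
        ≤ ∑ i ∈ Finset.range n, ∫ ρ in (r i)..(r (i+1)), (‖A ρ - Ahat‖ + εA) :=
      Finset.sum_le_sum hpiece
    _ = ∫ ρ in s..t, (‖A ρ - Ahat‖ + εA) := by
      rw [intervalIntegral.sum_integral_adjacent_intervals hintpiece, hr0', hrn]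
    _ = (∫ ρ in s..t, ‖A ρ - Ahat‖) + εA * (t - s) := by
      rw [intervalIntegral.integral_add (hgint s t ⟨le_rfl, hst⟩ ⟨hst, le_rfl⟩ hst)
        intervalIntegrable_const, intervalIntegral.integral_const, smul_eq_mul]
      ring
  -- combine
  have htri : ‖Shat (t - s) (iota v) - R t s (iota v)‖
      ≤ ‖Shat (t - s) (iota v) - iota (w n)‖ + ‖iota (w n) - R t s (iota v)‖ := by
    have := dist_triangle (Shat (t - s) (iota v)) (iota (w n)) (R t s (iota v))
    simpa [dist_eq_norm] using this
  have hsum1 : ∑ i ∈ Finset.range n, (C * ‖A (r i) - Ahat‖ * Δ)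
      = C * ∑ i ∈ Finset.range n, ‖A (r i) - Ahat‖ * Δ := by
    rw [Finset.mul_sum]
    refine Finset.sum_congr rfl (fun i _ => by ring)
  have hεAbound : C * (εA * (t - s)) + C₂ * εA * (t - s) ≤ ε := by
    have h1 : C * (εA * (t - s)) + C₂ * εA * (t - s) = εA * ((t - s) * (C + C₂)) := by ring
    have h2 : εA * ((t - s) * (C + C₂)) ≤ εA * D := by
      refine mul_le_mul_of_nonneg_left ?_ hεA0.le
      rw [hD]; linarith
    have h3 : εA * D = ε := by rw [hεA]; field_simp
    rw [h1, ← h3]; exact h2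
  calc ‖Shat (t - s) (iota v) - R t s (iota v)‖
      ≤ ‖Shat (t - s) (iota v) - iota (w n)‖ + ‖iota (w n) - R t s (iota v)‖ := htri
  _ ≤ (∑ i ∈ Finset.range n, (C * ‖A (r i) - Ahat‖ * Δ)) + C₂ * εA * (t - s) :=
    add_le_add tele1 tele2
  _ = C * (∑ i ∈ Finset.range n, ‖A (r i) - Ahat‖ * Δ) + C₂ * εA * (t - s) := by
    rw [hsum1]
  _ ≤ C * ((∫ ρ in s..t, ‖A ρ - Ahat‖) + εA * (t - s)) + C₂ * εA * (t - s) :=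
    add_le_add_left (mul_le_mul_of_nonneg_left riemann hC0) _
  _ = C * (∫ ρ in s..t, ‖A ρ - Ahat‖)
      + (C * (εA * (t - s)) + C₂ * εA * (t - s)) := by ring
  _ ≤ C * (∫ ρ in s..t, ‖A ρ - Ahat‖) + ε := by linarith
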